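/- Let X = ℕ × (ℕ ∪ {∞}) be the Johnstone poset, ordered by (m,n) ≤ (m',n') iff (m = m' and n ≤ n') or (n' = ∞ and n ≤ m'). Then X is a dcpo. -/

import Mathlib

def rUB {α : Type*} (r : α → α → Prop) (D : Set α) (a : α) : Prop := ∀ d ∈ D, r d a

def rLUB {α : Type*} (r : α → α → Prop) (D : Set α) (a : α) : Prop :=
  rUB r D a ∧ ∀ b, rUB r D b → r a b

def rDirected {α : Type*} (r : α → α → Prop) (D : Set α) : Prop :=
  ∀ a ∈ D, ∀ b ∈ D, ∃ c ∈ D, r a c ∧ r b c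

def rScottClosed {α : Type*} (r : α → α → Prop) (A : Set α) : Prop :=
  (∀ x y, r x y → y ∈ A → x ∈ A) ∧
  ∀ D ⊆ A, D.Nonempty → rDirected r D → ∀ a, rLUB r D a → a ∈ A

def rIrred {α : Type*} (r : α → α → Prop) (F : Set α) : Prop :=
  F.Nonempty ∧ ∀ F₁ F₂ : Set α, rScottClosed r F₁ → rScottClosed r F₂ →
    F ⊆ F₁ ∪ F₂ → F ⊆ F₁ ∨ F ⊆ F₂

/-- The Johnstone order on `ℕ × (ℕ ∪ {∞})`:
`(m, n) ≤ (m', n')` iff `m = m'` and `n ≤ n'`, or `n' = ∞` and `n ≤ m'`. -/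
def jle (p q : ℕ × ℕ∞) : Prop :=
  (p.1 = q.1 ∧ p.2 ≤ q.2) ∨ (q.2 = ⊤ ∧ p.2 ≤ (q.1 : ℕ∞))

/-- The Johnstone poset `ℕ × (ℕ ∪ {∞})` is a dcpo: every nonempty directed subset
has a least upper bound. -/
theorem johnstone_directedComplete :
    ∀ D : Set (ℕ × ℕ∞), D.Nonempty → rDirected jle D → ∃ a, rLUB jle D a := by
  rintro D ⟨p, hp⟩ hdir
  by_cases htop : ∃ q ∈ D, q.2 = ⊤
  · obtain ⟨q, hq, hq2⟩ := htop
    refine ⟨q, ?_, fun b hb => hb q hq⟩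
    intro d hd
    obtain ⟨c, hc, hdc, hqc⟩ := hdir d hd q hq
    have hcq : c = q := by
      rcases hqc with ⟨h1, h2⟩ | ⟨h1, h2⟩
      · have hc2 : c.2 = ⊤ := by rw [hq2] at h2; exact top_le_iff.mp h2
        exact Prod.ext h1.symm (hc2.trans hq2.symm)
      · rw [hq2] at h2; exact absurd h2 (by simp)
    rw [← hcq]; exact hdc
  · push_neg at htop
    have hsame : ∀ d ∈ D, d.1 = p.1 := by
      intro d hd
      obtain ⟨c, hc, hdc, hpc⟩ := hdir d hd p hp
      have hc2 := htop c hc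
      have h1 : d.1 = c.1 := by
        rcases hdc with ⟨h, _⟩ | ⟨h, _⟩
        · exact h
        · exact absurd h hc2
      have h2 : p.1 = c.1 := by
        rcases hpc with ⟨h, _⟩ | ⟨h, _⟩
        · exact h
        · exact absurd h hc2
      rw [h1, h2]
    set m := p.1 with hm
    by_cases hbdd : ∃ N : ℕ, ∀ d ∈ D, d.2 ≤ (N : ℕ∞)
    · obtain ⟨N, hN⟩ := hbdd
      set T : Set ℕ := {n | (m, (n : ℕ∞)) ∈ D} with hT
      have hmemT : ∀ d ∈ D, ∀ n : ℕ, d.2 = (n : ℕ∞) → n ∈ T := by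
        intro d hd n hn
        have : (m, (n : ℕ∞)) = d := Prod.ext (hsame d hd).symm hn.symm
        rw [hT]; simpa [this] using hd
      have hTne : T.Nonempty := by
        obtain ⟨n, hn⟩ := WithTop.ne_top_iff_exists.mp (htop p hp)
        exact ⟨n, hmemT p hp n hn.symm⟩
      have hTbdd : BddAbove T := by
        refine ⟨N, fun n hn => ?_⟩
        have := hN _ hn
        simpa using this
      have hsup : sSup T ∈ T := Nat.sSup_mem hTne hTbdd
      refine ⟨(m, ((sSup T : ℕ) : ℕ∞)), ?_, fun b hb => hb _ hsup⟩
      intro d hd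
      obtain ⟨n, hn⟩ := WithTop.ne_top_iff_exists.mp (htop d hd)
      left
      refine ⟨hsame d hd, ?_⟩
      rw [← hn]
      have := le_csSup hTbdd (hmemT d hd n hn.symm)
      exact (Nat.cast_le (α := ℕ∞)).mpr this
    · push_neg at hbdd
      refine ⟨(m, ⊤), fun d hd => Or.inl ⟨hsame d hd, le_top⟩, ?_⟩
      intro b hb
      have hb2 : b.2 = ⊤ := by
        by_contra h
        obtain ⟨l, hl⟩ := WithTop.ne_top_iff_exists.mp h
        obtain ⟨d, hd, hdl⟩ := hbdd l
        rcases hb d hd with ⟨_, h2⟩ | ⟨h1, _⟩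
        · exact (show (l : ℕ∞) < d.2 from hdl).not_ge (h2.trans_eq hl.symm)
        · exact h h1
      have hb1 : b.1 = m := by
        obtain ⟨d, hd, hdl⟩ := hbdd b.1
        rcases hb d hd with ⟨h1, _⟩ | ⟨_, h2⟩
        · rw [← h1, hsame d hd]
        · exact absurd h2 (show (b.1 : ℕ∞) < d.2 from hdl).not_ge
      exact Or.inl ⟨hb1.symm, hb2.ge⟩
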